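/- Let 𝔤 be a complex semisimple Lie algebra whose grading determined by a nonempty subset Σ of the simple roots is of Monge type, with dim 𝔤₋₁ > 2, let 𝔶 ⊆ 𝔤₋₁ be the codimension-1 abelian subalgebra and 𝔵 a 1-dimensional 𝔤₀-invariant complement of 𝔶 in 𝔤₋₁. Then there exist a unique simple root ζ ∈ Σ and roots β₁, …, β_d of Σ-height 1 such that 𝔵 = 𝔤_{−ζ} and 𝔶 = 𝔤_{−β₁} ⊕ 𝔤_{−β₂} ⊕ ⋯ ⊕ 𝔤_{−β_d}, where 𝔤_{−β} denotes the root space of −β. -/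

import Mathlib

open scoped RealInnerProductSpace BigOperators Classical

/-- A reduced crystallographic root system in a real inner product space,
together with a chosen base of simple roots and the coordinates of each
root with respect to the base. -/
structure RootSystemBase (V : Type*) [NormedAddCommGroup V] [InnerProductSpace ℝ V] where
  /-- the set of roots -/
  Δ : Finset V
  /-- the set of simple roots (the base) -/
  Δ0 : Finset V
  base_sub : Δ0 ⊆ Δ
  ne_zero : ∀ β ∈ Δ, β ≠ (0 : V)
  indep : LinearIndependent ℝ (fun a : ↥Δ0 => (a : V))
  neg_mem : ∀ β ∈ Δ, -β ∈ Δ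
  /-- `coeff β α` is the coefficient `n_α` of the simple root `α` in `β = ∑ n_α • α` -/
  coeff : V → V → ℤ
  coeff_spec : ∀ β ∈ Δ, β = ∑ α ∈ Δ0, (coeff β α : ℝ) • α
  coeff_sign : ∀ β ∈ Δ, (∀ α ∈ Δ0, 0 ≤ coeff β α) ∨ (∀ α ∈ Δ0, coeff β α ≤ 0)
  crystal : ∀ α ∈ Δ, ∀ β ∈ Δ, ∃ k : ℤ, 2 * ⟪β, α⟫ / ⟪α, α⟫ = (k : ℝ)
  reflect_mem : ∀ α ∈ Δ, ∀ β ∈ Δ, β - (2 * ⟪β, α⟫ / ⟪α, α⟫) • α ∈ Δ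
  reduced : ∀ α ∈ Δ, (2 : ℝ) • α ∉ Δ

namespace RootSystemBase

variable {V : Type*} [NormedAddCommGroup V] [InnerProductSpace ℝ V]

variable (R : RootSystemBase V)

/-- The height `ht_Σ(β)` of a root `β` relative to a subset `Sg` of the simple roots. -/
def ht (Sg : Finset V) (β : V) : ℤ := ∑ α ∈ Sg, R.coeff β α

/-- positive roots -/
def IsPos (β : V) : Prop := β ∈ R.Δ ∧ ∀ α ∈ R.Δ0, 0 ≤ R.coeff β α

/-- negative roots -/
def IsNeg (β : V) : Prop := β ∈ R.Δ ∧ ∀ α ∈ R.Δ0, R.coeff β α ≤ 0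

/-- Irreducibility of the root system (the Dynkin diagram is connected); this is
equivalent to the corresponding complex Lie algebra being simple. -/
def Irred : Prop :=
  ¬ ∃ S : Finset V, S ⊆ R.Δ0 ∧ S.Nonempty ∧ S ≠ R.Δ0 ∧
      ∀ a ∈ S, ∀ b ∈ R.Δ0, b ∉ S → ⟪a, b⟫ = 0

/-- Adjacency of two (simple) roots in the Dynkin diagram. -/
def Adj (a b : V) : Prop := a ≠ b ∧ ⟪a, b⟫ ≠ 0

end RootSystemBase

namespace RootSystemBase

variable {V : Type*} [NormedAddCommGroup V] [InnerProductSpace ℝ V]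
variable (R : RootSystemBase V)

lemma coords_unique {c d : V → ℝ} (h : ∑ α ∈ R.Δ0, c α • α = ∑ α ∈ R.Δ0, d α • α) :
    ∀ α ∈ R.Δ0, c α = d α := by
  have hz : ∑ a : ↥R.Δ0, (c ↑a - d ↑a) • (a : V) = 0 := by
    rw [Finset.sum_coe_sort R.Δ0 (fun α => (c α - d α) • α)]
    simp only [sub_smul]
    rw [Finset.sum_sub_distrib, h, sub_self]
  have key := linearIndependent_iff'.mp R.indep Finset.univ (fun a => c ↑a - d ↑a) hz
  intro α hα
  have := key ⟨α, hα⟩ (Finset.mem_univ _)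
  simpa [sub_eq_zero] using this

lemma coeff_neg {β : V} (hβ : β ∈ R.Δ) : ∀ α ∈ R.Δ0, R.coeff (-β) α = - R.coeff β α := by
  have h1 := R.coeff_spec β hβ
  have h2 := R.coeff_spec (-β) (R.neg_mem β hβ)
  have h : ∑ α ∈ R.Δ0, ((R.coeff (-β) α : ℝ)) • α
      = ∑ α ∈ R.Δ0, ((- R.coeff β α : ℤ) : ℝ) • α := by
    rw [← h2]
    push_cast
    simp only [neg_smul]
    rw [Finset.sum_neg_distrib, ← h1]
  intro α hα
  exact_mod_cast R.coords_unique h α hα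

lemma coeff_add {β γ : V} (hβ : β ∈ R.Δ) (hγ : γ ∈ R.Δ) (hβγ : β + γ ∈ R.Δ) :
    ∀ α ∈ R.Δ0, R.coeff (β + γ) α = R.coeff β α + R.coeff γ α := by
  have h1 := R.coeff_spec β hβ
  have h2 := R.coeff_spec γ hγ
  have h3 := R.coeff_spec (β + γ) hβγ
  have h : ∑ α ∈ R.Δ0, ((R.coeff (β + γ) α : ℝ)) • α
      = ∑ α ∈ R.Δ0, ((R.coeff β α + R.coeff γ α : ℤ) : ℝ) • α := by
    rw [← h3]
    push_cast
    simp only [add_smul]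
    rw [Finset.sum_add_distrib, ← h1, ← h2]
  intro α hα
  exact_mod_cast R.coords_unique h α hα

lemma coeff_simple {α : V} (hα : α ∈ R.Δ0) :
    ∀ α' ∈ R.Δ0, R.coeff α α' = if α' = α then 1 else 0 := by
  have h1 := R.coeff_spec α (R.base_sub hα)
  have h : ∑ α' ∈ R.Δ0, ((R.coeff α α' : ℝ)) • α'
      = ∑ α' ∈ R.Δ0, (((if α' = α then 1 else 0 : ℤ)) : ℝ) • α' := by
    rw [← h1]
    have : ∑ α' ∈ R.Δ0, (((if α' = α then 1 else 0 : ℤ)) : ℝ) • α'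
        = ∑ α' ∈ R.Δ0, (if α' = α then α' else 0) := by
      apply Finset.sum_congr rfl
      intro x hx
      by_cases hxα : x = α <;> simp [hxα]
    rw [this, Finset.sum_ite_eq' R.Δ0 α (fun x => x), if_pos hα]
  intro α' hα'
  exact_mod_cast R.coords_unique h α' hα'

lemma ht_neg {Sg : Finset V} (hSg : Sg ⊆ R.Δ0) {β : V} (hβ : β ∈ R.Δ) :
    R.ht Sg (-β) = - R.ht Sg β := by
  unfold ht
  rw [← Finset.sum_neg_distrib]
  exact Finset.sum_congr rfl fun α hα => R.coeff_neg hβ α (hSg hα)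

lemma ht_add {Sg : Finset V} (hSg : Sg ⊆ R.Δ0) {β γ : V} (hβ : β ∈ R.Δ) (hγ : γ ∈ R.Δ)
    (hβγ : β + γ ∈ R.Δ) : R.ht Sg (β + γ) = R.ht Sg β + R.ht Sg γ := by
  unfold ht
  rw [← Finset.sum_add_distrib]
  exact Finset.sum_congr rfl fun α hα => R.coeff_add hβ hγ hβγ α (hSg hα)

lemma ht_sub {Sg : Finset V} (hSg : Sg ⊆ R.Δ0) {β γ : V} (hγ : γ ∈ R.Δ) (hβ : β ∈ R.Δ)
    (hd : γ - β ∈ R.Δ) : R.ht Sg (γ - β) = R.ht Sg γ - R.ht Sg β := by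
  have h := R.ht_add hSg hd hβ (by rwa [sub_add_cancel])
  rw [sub_add_cancel] at h
  omega

lemma ht_simple {Sg : Finset V} (hSg : Sg ⊆ R.Δ0) {α : V} (hα : α ∈ R.Δ0) :
    R.ht Sg α = if α ∈ Sg then 1 else 0 := by
  unfold ht
  have : ∀ α' ∈ Sg, R.coeff α α' = if α' = α then 1 else 0 :=
    fun α' hα' => R.coeff_simple hα α' (hSg hα')
  rw [Finset.sum_congr rfl this, Finset.sum_ite_eq' Sg α (fun _ => 1)]

lemma pos_of_ht_pos {Sg : Finset V} (hSg : Sg ⊆ R.Δ0) {β : V} (hβ : β ∈ R.Δ)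
    (h : 1 ≤ R.ht Sg β) : ∀ α ∈ R.Δ0, 0 ≤ R.coeff β α := by
  rcases R.coeff_sign β hβ with h1 | h1
  · exact h1
  · exfalso
    have : R.ht Sg β ≤ 0 := Finset.sum_nonpos fun α hα => h1 α (hSg hα)
    omega

lemma inner_self_pos' {x : V} (h : x ≠ 0) : 0 < ⟪x, x⟫ := by
  rcases lt_or_eq_of_le (real_inner_self_nonneg (x := x)) with h' | h'
  · exact h'
  · exact absurd (real_inner_self_nonpos.mp h'.symm.le) h

lemma sub_mem {x y : V} (hx : x ∈ R.Δ) (hy : y ∈ R.Δ) (hxy : x ≠ y)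
    (hpos : 0 < ⟪x, y⟫) : x - y ∈ R.Δ := by
  obtain ⟨k₁, hk₁⟩ := R.crystal y hy x hx
  obtain ⟨k₂, hk₂⟩ := R.crystal x hx y hy
  have hxx : 0 < ⟪x, x⟫ := inner_self_pos' (R.ne_zero x hx)
  have hyy : 0 < ⟪y, y⟫ := inner_self_pos' (R.ne_zero y hy)
  have hyx : ⟪y, x⟫ = ⟪x, y⟫ := real_inner_comm x y
  have m1 : 2 * ⟪x, y⟫ = (k₁ : ℝ) * ⟪y, y⟫ := (div_eq_iff hyy.ne').mp hk₁
  have m2 : 2 * ⟪y, x⟫ = (k₂ : ℝ) * ⟪x, x⟫ := (div_eq_iff hxx.ne').mp hk₂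
  have hk₁pos : 0 < (k₁ : ℝ) := by nlinarith
  have hk₂pos : 0 < (k₂ : ℝ) := by nlinarith
  have hk₁1 : 1 ≤ k₁ := by exact_mod_cast hk₁pos
  have hk₂1 : 1 ≤ k₂ := by exact_mod_cast hk₂pos
  rcases eq_or_lt_of_le hk₁1 with h1 | h1
  · have := R.reflect_mem y hy x hx
    rw [hk₁, ← h1] at this
    simpa using this
  · rcases eq_or_lt_of_le hk₂1 with h2 | h2
    · have := R.reflect_mem x hx y hy
      rw [hk₂, ← h2] at this
      simp only [Int.cast_one, one_smul] at this
      have := R.neg_mem _ this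
      simpa using this
    · exfalso
      have e1 : (2 : ℝ) ≤ (k₁ : ℝ) := by exact_mod_cast h1
      have e2 : (2 : ℝ) ≤ (k₂ : ℝ) := by exact_mod_cast h2
      have f1 : ⟪y, y⟫ ≤ ⟪x, y⟫ := by nlinarith
      have f2 : ⟪x, x⟫ ≤ ⟪x, y⟫ := by nlinarith
      have hsub : (0 : ℝ) < ⟪x - y, x - y⟫ := inner_self_pos' (sub_ne_zero.mpr hxy)
      rw [real_inner_sub_sub_self] at hsub
      linarith

lemma add_mem' {x y : V} (hx : x ∈ R.Δ) (hy : y ∈ R.Δ) (hxy : x ≠ -y)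
    (hneg : ⟪x, y⟫ < 0) : x + y ∈ R.Δ := by
  have h := R.sub_mem hx (R.neg_mem y hy) hxy (by rw [inner_neg_right]; linarith)
  simpa [sub_neg_eq_add] using h

lemma exists_simple_inner_pos {β : V} (hβ : β ∈ R.Δ)
    (hc : ∀ α ∈ R.Δ0, 0 ≤ R.coeff β α) :
    ∃ α ∈ R.Δ0, 0 < R.coeff β α ∧ 0 < ⟪β, α⟫ := by
  by_contra hcon
  push_neg at hcon
  have hββ : 0 < ⟪β, β⟫ := inner_self_pos' (R.ne_zero β hβ)
  have hexp : ⟪β, β⟫ = ∑ α ∈ R.Δ0, (R.coeff β α : ℝ) * ⟪β, α⟫ := by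
    conv_lhs => rw [show ⟪β, β⟫ = ⟪β, ∑ α ∈ R.Δ0, (R.coeff β α : ℝ) • α⟫ from by
      rw [← R.coeff_spec β hβ]]
    rw [inner_sum]
    exact Finset.sum_congr rfl fun α _ => real_inner_smul_right β α _
  have hle : ∑ α ∈ R.Δ0, (R.coeff β α : ℝ) * ⟪β, α⟫ ≤ 0 := by
    apply Finset.sum_nonpos
    intro α hα
    rcases lt_or_eq_of_le (hc α hα) with h0 | h0
    · have := hcon α hα h0
      have h0' : (0 : ℝ) ≤ (R.coeff β α : ℝ) := by exact_mod_cast (hc α hα)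
      exact mul_nonpos_of_nonneg_of_nonpos h0' this
    · rw [← h0]; simp
  linarith


lemma total_ht_le {Sg : Finset V} (hSg : Sg ⊆ R.Δ0) {β : V} (hβ : β ∈ R.Δ)
    (hc : ∀ α ∈ R.Δ0, 0 ≤ R.coeff β α) :
    R.ht Sg β ≤ ∑ α ∈ R.Δ0, R.coeff β α :=
  Finset.sum_le_sum_of_subset_of_nonneg hSg fun α hα _ => hc α hα

lemma ht2_decomp {Sg : Finset V} (hSg : Sg ⊆ R.Δ0) :
    ∀ n : ℕ, ∀ γ ∈ R.Δ, (∑ α ∈ R.Δ0, R.coeff γ α) ≤ (n : ℤ) → R.ht Sg γ = 2 →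
    ∃ β ∈ R.Δ, ∃ δ ∈ R.Δ, R.ht Sg β = 1 ∧ R.ht Sg δ = 1 ∧ γ = β + δ := by
  intro n
  induction n with
  | zero =>
    intro γ hγ htot hht
    exfalso
    have hc := R.pos_of_ht_pos hSg hγ (by omega)
    have := R.total_ht_le hSg hγ hc
    omega
  | succ n ih =>
    intro γ hγ htot hht
    have hc := R.pos_of_ht_pos hSg hγ (by omega)
    obtain ⟨α, hα, hcα, hip⟩ := R.exists_simple_inner_pos hγ hc
    have hαΔ : α ∈ R.Δ := R.base_sub hα
    have hγα : γ ≠ α := by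
      intro h
      rw [h, R.ht_simple hSg hα] at hht
      split at hht <;> omega
    have hγ' : γ - α ∈ R.Δ := R.sub_mem hγ hαΔ hγα hip
    have htγ' : R.ht Sg (γ - α) = 2 - R.ht Sg α := by
      rw [R.ht_sub hSg hγ hαΔ hγ', hht]
    have htotγ' : ∑ α' ∈ R.Δ0, R.coeff (γ - α) α' = (∑ α' ∈ R.Δ0, R.coeff γ α') - 1 := by
      have hadd : ∀ α' ∈ R.Δ0, R.coeff (γ - α) α' = R.coeff γ α' - R.coeff α α' := by
        intro α' hα'
        have := R.coeff_add hγ' hαΔ (by rwa [sub_add_cancel]) α' hα'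
        rw [sub_add_cancel] at this
        omega
      rw [Finset.sum_congr rfl hadd, Finset.sum_sub_distrib]
      have : ∑ α' ∈ R.Δ0, R.coeff α α' = 1 := by
        rw [Finset.sum_congr rfl (R.coeff_simple hα), Finset.sum_ite_eq' R.Δ0 α (fun _ => 1),
          if_pos hα]
      omega
    by_cases hαSg : α ∈ Sg
    · refine ⟨α, hαΔ, γ - α, hγ', ?_, ?_, by abel⟩
      · rw [R.ht_simple hSg hα, if_pos hαSg]
      · rw [htγ', R.ht_simple hSg hα, if_pos hαSg]; norm_num
    · have htα : R.ht Sg α = 0 := by rw [R.ht_simple hSg hα, if_neg hαSg]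
      obtain ⟨β, hβ, δ, hδ, htβ, htδ, hsum⟩ :=
        ih (γ - α) hγ' (by omega) (by omega)
      -- case analysis
      by_cases c1 : 0 < ⟪γ, β⟫
      · have hγβ : γ ≠ β := by
          intro h; rw [h] at hht; omega
        have hd : γ - β ∈ R.Δ := R.sub_mem hγ hβ hγβ c1
        exact ⟨β, hβ, γ - β, hd, htβ, by rw [R.ht_sub hSg hγ hβ hd]; omega, by abel⟩
      by_cases c2 : 0 < ⟪γ, δ⟫
      · have hγδ : γ ≠ δ := by
          intro h; rw [h] at hht; omega
        have hd : γ - δ ∈ R.Δ := R.sub_mem hγ hδ hγδ c2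
        exact ⟨γ - δ, hd, δ, hδ, by rw [R.ht_sub hSg hγ hδ hd]; omega, htδ, by abel⟩
      by_cases c3 : ⟪α, β⟫ < 0
      · have hαβ : α ≠ -β := by
          intro h
          have := R.ht_neg hSg hβ
          rw [← h] at this
          omega
        have hd : α + β ∈ R.Δ := R.add_mem' hαΔ hβ hαβ c3
        refine ⟨α + β, hd, δ, hδ, by rw [R.ht_add hSg hαΔ hβ hd]; omega, htδ, ?_⟩
        have : γ - α = β + δ := hsum
        have : γ = α + (β + δ) := by rw [← this]; abel
        rw [this]; abel
      by_cases c4 : ⟪α, δ⟫ < 0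
      · have hαδ : α ≠ -δ := by
          intro h
          have := R.ht_neg hSg hδ
          rw [← h] at this
          omega
        have hd : α + δ ∈ R.Δ := R.add_mem' hαΔ hδ hαδ c4
        refine ⟨β, hβ, α + δ, hd, htβ, by rw [R.ht_add hSg hαΔ hδ hd]; omega, ?_⟩
        have h5 : γ - α = β + δ := hsum
        have : γ = α + (β + δ) := by rw [← h5]; abel
        rw [this]; abel
      · exfalso
        push_neg at c1 c2 c3 c4
        have hγ'0 : γ - α ≠ 0 := R.ne_zero _ hγ'
        have hγ'γ' : 0 < ⟪γ - α, γ - α⟫ := inner_self_pos' hγ'0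
        have hexp : ⟪γ, β⟫ + ⟪γ, δ⟫ = ⟪γ - α, γ - α⟫ + ⟪α, β⟫ + ⟪α, δ⟫ := by
          have hγeq : γ = (γ - α) + α := by abel
          calc ⟪γ, β⟫ + ⟪γ, δ⟫ = ⟪γ, β + δ⟫ := (inner_add_right γ β δ).symm
            _ = ⟪γ, γ - α⟫ := by rw [← hsum]
            _ = ⟪(γ - α) + α, γ - α⟫ := by rw [← hγeq]
            _ = ⟪γ - α, γ - α⟫ + ⟪α, γ - α⟫ := inner_add_left _ _ _
            _ = ⟪γ - α, γ - α⟫ + ⟪α, β + δ⟫ := by rw [hsum]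
            _ = ⟪γ - α, γ - α⟫ + ⟪α, β⟫ + ⟪α, δ⟫ := by rw [inner_add_right]; ring
        linarith

lemma simple_of_ht_one {Sg : Finset V} (hSg : Sg ⊆ R.Δ0) {ζ : V} (hζ : ζ ∈ R.Δ)
    (h1 : R.ht Sg ζ = 1) (H0 : ∀ η ∈ R.Δ, R.ht Sg η = 0 → η - ζ ∉ R.Δ) : ζ ∈ Sg := by
  have hc := R.pos_of_ht_pos hSg hζ (by omega)
  obtain ⟨α, hα, hcα, hip⟩ := R.exists_simple_inner_pos hζ hc
  have hαΔ : α ∈ R.Δ := R.base_sub hα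
  by_cases hζα : ζ = α
  · subst hζα
    rw [R.ht_simple hSg hα] at h1
    split at h1
    · assumption
    · omega
  · exfalso
    have hd : ζ - α ∈ R.Δ := R.sub_mem hζ hαΔ hζα hip
    by_cases hαSg : α ∈ Sg
    · have hη : R.ht Sg (ζ - α) = 0 := by
        rw [R.ht_sub hSg hζ hαΔ hd, R.ht_simple hSg hα, if_pos hαSg]; omega
      have : (ζ - α) - ζ ∈ R.Δ → False := H0 (ζ - α) hd hη
      apply this
      have : (ζ - α) - ζ = -α := by abel
      rw [this]
      exact R.neg_mem α hαΔ
    · have hη : R.ht Sg α = 0 := by rw [R.ht_simple hSg hα, if_neg hαSg]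
      apply H0 α hαΔ hη
      have : α - ζ = -(ζ - α) := by abel
      rw [this]
      exact R.neg_mem _ hd

end RootSystemBase

/-- The root space decomposition data of a complex semisimple Lie algebra `L` with
root system `base`: a Cartan subalgebra `H`, one-dimensional root spaces `rs β`,
and the standard bracket relations among them. -/
structure GradedLieData (V : Type*) [NormedAddCommGroup V] [InnerProductSpace ℝ V]
    (L : Type*) [LieRing L] [LieAlgebra ℂ L] where
  /-- the underlying root system with base -/
  base : RootSystemBase V
  /-- the Cartan subalgebra -/
  H : Submodule ℂ L
  /-- the root spaces -/
  rs : V → Submodule ℂ L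
  rs_dim : ∀ β ∈ base.Δ, Module.finrank ℂ ↥(rs β) = 1
  rs_bot : ∀ v : V, v ∉ base.Δ → rs v = ⊥
  sup_eq_top : H ⊔ (⨆ β ∈ base.Δ, rs β) = ⊤
  h_indep : Disjoint H (⨆ β ∈ base.Δ, rs β)
  rs_indep : ∀ β ∈ base.Δ, Disjoint (rs β) (H ⊔ ⨆ γ ∈ base.Δ.erase β, rs γ)
  /-- `toH v` is the element of the Cartan subalgebra representing `v` via the Killing
  form -/
  toH : V → L
  toH_mem : ∀ v : V, toH v ∈ H
  toH_add : ∀ u v : V, toH (u + v) = toH u + toH v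
  H_span : H = Submodule.span ℂ (toH '' ↑base.Δ0)
  br_toH : ∀ v : V, ∀ β ∈ base.Δ, ∀ x ∈ rs β, ⁅toH v, x⁆ = ((⟪β, v⟫ : ℝ) : ℂ) • x
  br_h_h : ∀ h ∈ H, ∀ h' ∈ H, ⁅h, h'⁆ = (0 : L)
  br_h_rs : ∀ β ∈ base.Δ, ∀ h ∈ H, ∀ x ∈ rs β, ⁅h, x⁆ ∈ rs β
  br_rs_mem : ∀ β ∈ base.Δ, ∀ γ ∈ base.Δ, β + γ ∈ base.Δ →
      ∀ x ∈ rs β, ∀ y ∈ rs γ, ⁅x, y⁆ ∈ rs (β + γ)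
  br_rs_zero : ∀ β ∈ base.Δ, ∀ γ ∈ base.Δ, β + γ ∉ base.Δ → β + γ ≠ 0 →
      ∀ x ∈ rs β, ∀ y ∈ rs γ, ⁅x, y⁆ = (0 : L)
  br_rs_opp : ∀ β ∈ base.Δ, ∀ x ∈ rs β, ∀ y ∈ rs (-β),
      ⁅x, y⁆ ∈ Submodule.span ℂ ({toH β} : Set L)
  br_nondeg : ∀ β ∈ base.Δ, ∀ γ ∈ base.Δ, β + γ ∈ base.Δ →
      ∀ x ∈ rs β, ∀ y ∈ rs γ, ⁅x, y⁆ = (0 : L) → x = 0 ∨ y = 0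

namespace GradedLieData

variable {V : Type*} [NormedAddCommGroup V] [InnerProductSpace ℝ V]
variable {L : Type*} [LieRing L] [LieAlgebra ℂ L]

variable (G : GradedLieData V L)

/-- The grading component `𝔤ⱼ` of the grading of `L` determined by the subset `Sg`
of the simple roots. -/
def g (Sg : Finset V) (j : ℤ) : Submodule ℂ L :=
  if j = 0 then G.H ⊔ ⨆ β ∈ G.base.Δ.filter (fun β => G.base.ht Sg β = 0), G.rs β
  else ⨆ β ∈ G.base.Δ.filter (fun β => G.base.ht Sg β = j), G.rs β

/-- The grading of `L` determined by `Sg` is of *Monge type*: the component `𝔤₋₁`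
contains a nonzero abelian subalgebra `Y` of codimension one with
`dim 𝔤₋₂ = dim Y`. -/
def Monge (Sg : Finset V) : Prop :=
  ∃ Y : Submodule ℂ L, Y ≤ G.g Sg (-1) ∧ Y ≠ ⊥ ∧
    (∀ a ∈ Y, ∀ b ∈ Y, ⁅a, b⁆ = (0 : L)) ∧
    Module.finrank ℂ ↥Y + 1 = Module.finrank ℂ ↥(G.g Sg (-1)) ∧
    Module.finrank ℂ ↥(G.g Sg (-2)) = Module.finrank ℂ ↥Y

end GradedLieData

section Aux

variable {V : Type*} [NormedAddCommGroup V] [InnerProductSpace ℝ V]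
variable {L : Type*} [LieRing L] [LieAlgebra ℂ L] [FiniteDimensional ℂ L]
variable (G : GradedLieData V L)

lemma aux_exists_gen :
    ∀ β : V, ∃ x : L, β ∈ G.base.Δ →
      x ∈ G.rs β ∧ x ≠ 0 ∧ G.rs β = Submodule.span ℂ {x} := by
  intro β
  by_cases hβ : β ∈ G.base.Δ
  · have hrk := G.rs_dim β hβ
    have hne : G.rs β ≠ ⊥ := by
      intro h
      rw [h] at hrk
      simp [finrank_bot] at hrk
    obtain ⟨x, hx, hx0⟩ := (Submodule.ne_bot_iff _).mp hne
    refine ⟨x, fun _ => ⟨hx, hx0, ?_⟩⟩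
    refine (Submodule.eq_of_le_of_finrank_le ?_ ?_).symm
    · rwa [Submodule.span_singleton_le_iff_mem]
    · rw [hrk, finrank_span_singleton hx0]
  · exact ⟨0, fun h => absurd h hβ⟩

variable {e : V → L}
variable (he : ∀ β ∈ G.base.Δ, e β ∈ G.rs β ∧ e β ≠ 0 ∧ G.rs β = Submodule.span ℂ {e β})

include he

lemma aux_rs_sub_g1 {s : Finset V} (hs : s ⊆ G.base.Δ) {β : V} (hβ : β ∈ s) :
    G.rs β ≤ ⨆ γ ∈ s, G.rs γ :=
  le_iSup₂ (f := fun γ _ => G.rs γ) β hβ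

lemma aux_sum_coords {s : Finset V} (hs : s ⊆ G.base.Δ) (f : V → ℂ)
    (h : ∑ β ∈ s, f β • e β = 0) : ∀ β ∈ s, f β = 0 := by
  intro β hβ
  have hβΔ : β ∈ G.base.Δ := hs hβ
  have hsum := Finset.sum_erase_add s (fun γ => f γ • e γ) hβ
  rw [h] at hsum
  have hsplit : f β • e β = - ∑ γ ∈ s.erase β, f γ • e γ := eq_neg_of_add_eq_zero_right hsum
  have hmem1 : f β • e β ∈ G.rs β := Submodule.smul_mem _ _ (he β hβΔ).1
  have hmem2 : f β • e β ∈ G.H ⊔ ⨆ γ ∈ G.base.Δ.erase β, G.rs γ := by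
    rw [hsplit]
    apply Submodule.neg_mem
    apply le_sup_right (b := ⨆ γ ∈ G.base.Δ.erase β, G.rs γ) (a := G.H)
    apply Submodule.sum_mem
    intro γ hγ
    have hγΔ : γ ∈ G.base.Δ.erase β :=
      Finset.mem_erase.mpr ⟨(Finset.mem_erase.mp hγ).1, hs (Finset.mem_erase.mp hγ).2⟩
    exact le_iSup₂ (f := fun γ _ => G.rs γ) γ hγΔ
      (Submodule.smul_mem _ _ (he γ (hs (Finset.mem_erase.mp hγ).2)).1)
  have h0 : f β • e β = 0 :=
    Submodule.disjoint_def.mp (G.rs_indep β hβΔ) _ hmem1 hmem2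
  rcases smul_eq_zero.mp h0 with h' | h'
  · exact h'
  · exact absurd h' (he β hβΔ).2.1

lemma aux_e_inj {β γ : V} (hβ : β ∈ G.base.Δ) (hγ : γ ∈ G.base.Δ) (hne : β ≠ γ)
    (h : e β = e γ) : False := by
  have hmem1 : e β ∈ G.rs β := (he β hβ).1
  have hmem2 : e β ∈ G.H ⊔ ⨆ δ ∈ G.base.Δ.erase β, G.rs δ := by
    apply le_sup_right (b := ⨆ δ ∈ G.base.Δ.erase β, G.rs δ) (a := G.H)
    apply le_iSup₂ (f := fun δ _ => G.rs δ) γ (Finset.mem_erase.mpr ⟨hne.symm, hγ⟩)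
    rw [h]
    exact (he γ hγ).1
  exact (he β hβ).2.1 (Submodule.disjoint_def.mp (G.rs_indep β hβ) _ hmem1 hmem2)

lemma aux_rs_disjoint {β γ : V} (hβ : β ∈ G.base.Δ) (hγ : γ ∈ G.base.Δ) (hne : β ≠ γ)
    {z : L} (h1 : z ∈ G.rs β) (h2 : z ∈ G.rs γ) : z = 0 := by
  apply Submodule.disjoint_def.mp (G.rs_indep β hβ) _ h1
  apply le_sup_right (b := ⨆ δ ∈ G.base.Δ.erase β, G.rs δ) (a := G.H)
  exact le_iSup₂ (f := fun δ _ => G.rs δ) γ (Finset.mem_erase.mpr ⟨hne.symm, hγ⟩) h2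

lemma aux_iSup_span {s : Finset V} (hs : s ⊆ G.base.Δ) :
    (⨆ β ∈ s, G.rs β) = Submodule.span ℂ (e '' ↑s) := by
  apply le_antisymm
  · apply iSup₂_le
    intro β hβ
    rw [(he β (hs hβ)).2.2]
    exact Submodule.span_mono (Set.singleton_subset_iff.mpr ⟨β, hβ, rfl⟩)
  · rw [Submodule.span_le]
    rintro _ ⟨β, hβ, rfl⟩
    exact le_iSup₂ (f := fun γ _ => G.rs γ) β hβ (he β (hs hβ)).1

lemma aux_finrank {s : Finset V} (hs : s ⊆ G.base.Δ) :
    Module.finrank ℂ ↥(⨆ β ∈ s, G.rs β) = s.card := by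
  have hli : LinearIndependent ℂ (fun i : ↥s => e ↑i) := by
    rw [Fintype.linearIndependent_iff]
    intro g hg i
    classical
    set f : V → ℂ := fun β => if hβ : β ∈ s then g ⟨β, hβ⟩ else 0 with hf
    have hsum : ∑ β ∈ s, f β • e β = 0 := by
      rw [← Finset.sum_coe_sort s (fun β => f β • e β)]
      rw [← hg]
      apply Finset.sum_congr rfl
      intro x _
      simp [hf, x.2]
    have := aux_sum_coords G he hs f hsum ↑i i.2
    simpa [hf, i.2] using this
  have hrange : Set.range (fun i : ↥s => e ↑i) = e '' ↑s := by
    ext z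
    simp
  rw [aux_iSup_span G he hs, ← hrange, finrank_span_eq_card hli, Fintype.card_coe]

lemma aux_mem_decomp {s : Finset V} (hs : s ⊆ G.base.Δ) {x : L}
    (hx : x ∈ ⨆ β ∈ s, G.rs β) : ∃ f : V → ℂ, x = ∑ β ∈ s, f β • e β := by
  classical
  rw [aux_iSup_span G he hs, ← Finset.coe_image (f := e)] at hx
  obtain ⟨f, -, hf⟩ := Submodule.mem_span_finset.mp hx
  refine ⟨fun β => f (e β), ?_⟩
  rw [← hf]
  rw [Finset.sum_image (fun β hβ γ hγ h => by
    by_contra hne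
    exact aux_e_inj G he (hs hβ) (hs hγ) hne h)]

end Aux
/-- For a grading of Monge type of a complex semisimple Lie algebra
with `dim 𝔤₋₁ > 2`, with codimension-one abelian subalgebra `Y ⊆ 𝔤₋₁` and
one-dimensional `𝔤₀`-invariant complement `X`, there are a unique simple root `ζ ∈ Σ`
and (distinct) roots `β₁, …, β_d` of `Σ`-height one such that `X = 𝔤_{-ζ}` and
`Y = 𝔤_{-β₁} ⊕ ⋯ ⊕ 𝔤_{-β_d}`. -/
theorem statement3 {V : Type*} [NormedAddCommGroup V] [InnerProductSpace ℝ V]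
    {L : Type*} [LieRing L] [LieAlgebra ℂ L] [FiniteDimensional ℂ L]
    (G : GradedLieData V L) (Sg : Finset V) (hSg : Sg ⊆ G.base.Δ0) (hne : Sg.Nonempty)
    (hdim : 2 < Module.finrank ℂ ↥(G.g Sg (-1)))
    (Y : Submodule ℂ L) (hY1 : Y ≤ G.g Sg (-1)) (hY0 : Y ≠ ⊥)
    (hYab : ∀ a ∈ Y, ∀ b ∈ Y, ⁅a, b⁆ = (0 : L))
    (hYcodim : Module.finrank ℂ ↥Y + 1 = Module.finrank ℂ ↥(G.g Sg (-1)))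
    (hYdim : Module.finrank ℂ ↥(G.g Sg (-2)) = Module.finrank ℂ ↥Y)
    (X : Submodule ℂ L) (hXdim : Module.finrank ℂ ↥X = 1)
    (hXinv : ∀ u ∈ G.g Sg 0, ∀ x ∈ X, ⁅u, x⁆ ∈ X)
    (hXY : X ⊔ Y = G.g Sg (-1)) (hXY' : X ⊓ Y = ⊥) :
    (∃! ζ : V, ζ ∈ Sg ∧ X = G.rs (-ζ)) ∧
    ∃ B : Finset V, (∀ β ∈ B, β ∈ G.base.Δ ∧ G.base.ht Sg β = 1) ∧
      Y = ⨆ β ∈ B, G.rs (-β) := by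

  classical
  obtain ⟨e, he⟩ : ∃ e : V → L, ∀ β : V, β ∈ G.base.Δ →
      e β ∈ G.rs β ∧ e β ≠ 0 ∧ G.rs β = Submodule.span ℂ {e β} := by
    choose e he using aux_exists_gen G
    exact ⟨e, he⟩
  have he' : ∀ β ∈ G.base.Δ, e β ∈ G.rs β ∧ e β ≠ 0 ∧ G.rs β = Submodule.span ℂ {e β} := he
  set R := G.base with hRdef
  set N := R.Δ.filter (fun β => R.ht Sg β = -1) with hNdef
  have hNsub : N ⊆ R.Δ := Finset.filter_subset _ _
  have hg1 : G.g Sg (-1) = ⨆ β ∈ N, G.rs β := by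
    rw [GradedLieData.g, if_neg (by decide : (-1 : ℤ) ≠ 0)]
  set N2 := R.Δ.filter (fun β => R.ht Sg β = -2) with hN2def
  have hN2sub : N2 ⊆ R.Δ := Finset.filter_subset _ _
  have hg2 : G.g Sg (-2) = ⨆ β ∈ N2, G.rs β := by
    rw [GradedLieData.g, if_neg (by decide : (-2 : ℤ) ≠ 0)]
  have hcard : Module.finrank ℂ ↥(G.g Sg (-1)) = N.card := by
    rw [hg1]; exact aux_finrank G he' hNsub
  have hN3 : 2 < N.card := hcard ▸ hdim
  -- Step 1 : find β₀ with X = rs β₀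
  have hXle : X ≤ G.g Sg (-1) := hXY ▸ le_sup_left
  have hXne : X ≠ ⊥ := by
    intro h; rw [h] at hXdim; simp at hXdim
  obtain ⟨x, hxX, hx0⟩ := (Submodule.ne_bot_iff X).mp hXne
  have hXspan : X = Submodule.span ℂ {x} := by
    refine (Submodule.eq_of_le_of_finrank_le ?_ ?_).symm
    · rwa [Submodule.span_singleton_le_iff_mem]
    · rw [hXdim, finrank_span_singleton hx0]
  obtain ⟨f, hfx⟩ := aux_mem_decomp G he' hNsub (hg1 ▸ hXle hxX)
  set T := N.filter (fun β => f β ≠ 0) with hTdef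
  have hTsub : T ⊆ N := Finset.filter_subset _ _
  have hTne : T.Nonempty := by
    rw [Finset.nonempty_iff_ne_empty]
    intro hcon
    apply hx0
    rw [hfx]
    apply Finset.sum_eq_zero
    intro β hβ
    have : f β = 0 := by
      by_contra h
      have : β ∈ T := Finset.mem_filter.mpr ⟨hβ, h⟩
      rw [hcon] at this
      exact absurd this (Finset.notMem_empty β)
    rw [this, zero_smul]
  obtain ⟨β₀, hβ₀T⟩ := hTne
  have hβ₀N : β₀ ∈ N := hTsub hβ₀T
  have hβ₀Δ : β₀ ∈ R.Δ := hNsub hβ₀N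
  have htβ₀ : R.ht Sg β₀ = -1 := (Finset.mem_filter.mp hβ₀N).2
  have hfβ₀ : f β₀ ≠ 0 := (Finset.mem_filter.mp hβ₀T).2
  -- key : all support roots are equal
  have hkey : ∀ v : V, ∀ β ∈ T, ∀ γ ∈ T, ⟪β, v⟫ = ⟪γ, v⟫ := by
    intro v β hβ γ hγ
    have hbr : ⁅G.toH v, x⁆ = ∑ β ∈ N, (f β * ((⟪β, v⟫ : ℝ) : ℂ)) • e β := by
      have : ⁅G.toH v, x⁆ = (LieAlgebra.ad ℂ L (G.toH v)) x := rfl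
      rw [this, hfx, map_sum]
      apply Finset.sum_congr rfl
      intro δ hδ
      rw [LieAlgebra.ad_apply, lie_smul, G.br_toH v δ (hNsub hδ) (e δ) (he' δ (hNsub hδ)).1,
        smul_smul]
    have htoHg0 : G.toH v ∈ G.g Sg 0 := by
      rw [GradedLieData.g, if_pos rfl]
      exact Submodule.mem_sup_left (G.toH_mem v)
    have hmemX : ⁅G.toH v, x⁆ ∈ X := hXinv _ htoHg0 x hxX
    rw [hXspan] at hmemX
    obtain ⟨c, hc⟩ := Submodule.mem_span_singleton.mp hmemX
    have hzero : ∑ δ ∈ N, (f δ * ((⟪δ, v⟫ : ℝ) : ℂ) - c * f δ) • e δ = 0 := by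
      have hch : ∑ δ ∈ N, (c * f δ) • e δ = c • x := by
        rw [hfx, Finset.smul_sum]
        exact Finset.sum_congr rfl fun δ _ => (smul_smul c (f δ) (e δ)).symm
      simp only [sub_smul]
      rw [Finset.sum_sub_distrib, ← hbr, hch, ← hc, sub_self]
    have hco := aux_sum_coords G he' hNsub _ hzero
    have hβv : ((⟪β, v⟫ : ℝ) : ℂ) = c := by
      have := hco β (hTsub hβ)
      have hfβ : f β ≠ 0 := (Finset.mem_filter.mp hβ).2
      have h2 : f β * (((⟪β, v⟫ : ℝ) : ℂ) - c) = 0 := by linear_combination this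
      rcases mul_eq_zero.mp h2 with h | h
      · exact absurd h hfβ
      · exact sub_eq_zero.mp h
    have hγv : ((⟪γ, v⟫ : ℝ) : ℂ) = c := by
      have := hco γ (hTsub hγ)
      have hfγ : f γ ≠ 0 := (Finset.mem_filter.mp hγ).2
      have h2 : f γ * (((⟪γ, v⟫ : ℝ) : ℂ) - c) = 0 := by linear_combination this
      rcases mul_eq_zero.mp h2 with h | h
      · exact absurd h hfγ
      · exact sub_eq_zero.mp h
    have : ((⟪β, v⟫ : ℝ) : ℂ) = ((⟪γ, v⟫ : ℝ) : ℂ) := by rw [hβv, hγv]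
    exact_mod_cast this
  have hTeq : ∀ γ ∈ T, γ = β₀ := by
    intro γ hγ
    have h1 : ⟪γ, γ - β₀⟫ = ⟪β₀, γ - β₀⟫ := hkey (γ - β₀) γ hγ β₀ hβ₀T
    have : ⟪γ - β₀, γ - β₀⟫ = (0 : ℝ) := by
      rw [inner_sub_left, h1, sub_self]
    have := inner_self_eq_zero.mp this
    exact sub_eq_zero.mp this
  have hxeq : x = f β₀ • e β₀ := by
    rw [hfx]
    rw [Finset.sum_eq_single_of_mem β₀ hβ₀N]
    intro γ hγ hγne
    have : f γ = 0 := by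
      by_contra h
      exact hγne (hTeq γ (Finset.mem_filter.mpr ⟨hγ, h⟩))
    rw [this, zero_smul]
  have hXrs : X = G.rs β₀ := by
    rw [hXspan, (he' β₀ hβ₀Δ).2.2, hxeq,
      Submodule.span_singleton_smul_eq (isUnit_iff_ne_zero.mpr hfβ₀) _]
  have heβ₀X : e β₀ ∈ X := hXrs ▸ (he' β₀ hβ₀Δ).1
  -- Step 2 : invariance forces no root of height 0 connects to β₀
  have H0 : ∀ η ∈ R.Δ, R.ht Sg η = 0 → η + β₀ ∉ R.Δ := by
    intro η hη hhtη hmem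
    have hu : e η ∈ G.g Sg 0 := by
      rw [GradedLieData.g, if_pos rfl]
      exact Submodule.mem_sup_right (le_iSup₂ (f := fun γ _ => G.rs γ) η
        (Finset.mem_filter.mpr ⟨hη, hhtη⟩) (he' η hη).1)
    have hbr : ⁅e η, e β₀⁆ ∈ X := hXinv _ hu (e β₀) heβ₀X
    have hbr2 : ⁅e η, e β₀⁆ ∈ G.rs (η + β₀) :=
      G.br_rs_mem η hη β₀ hβ₀Δ hmem _ (he' η hη).1 _ (he' β₀ hβ₀Δ).1
    have hne' : η + β₀ ≠ β₀ := by
      intro h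
      apply R.ne_zero η hη
      have h2 : η + β₀ = 0 + β₀ := by rw [h, zero_add]
      exact add_right_cancel h2
    have h0 : ⁅e η, e β₀⁆ = 0 :=
      aux_rs_disjoint G he' hmem hβ₀Δ hne' hbr2 (hXrs ▸ hbr)
    rcases G.br_nondeg η hη β₀ hβ₀Δ hmem _ (he' η hη).1 _ (he' β₀ hβ₀Δ).1 h0 with h | h
    · exact (he' η hη).2.1 h
    · exact (he' β₀ hβ₀Δ).2.1 h
  -- ζ
  have hζΔ : -β₀ ∈ R.Δ := R.neg_mem β₀ hβ₀Δ
  have htζ : R.ht Sg (-β₀) = 1 := by rw [R.ht_neg hSg hβ₀Δ, htβ₀]; ring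
  have hζSg : -β₀ ∈ Sg := by
    apply R.simple_of_ht_one hSg hζΔ htζ
    intro η hη h0 hmem
    apply H0 η hη h0
    rwa [sub_neg_eq_add] at hmem
  have hXfinal : X = G.rs (-(-β₀)) := by rw [neg_neg]; exact hXrs
  -- Step 3 : injectivity of ad (e β₀) on Y
  have hbrD : ∀ a ∈ G.g Sg (-1), ∀ b ∈ G.g Sg (-1),
      ⁅a, b⁆ ∈ Submodule.map (LieAlgebra.ad ℂ L (e β₀) : L →ₗ[ℂ] L) Y := by
    intro a ha b hb
    rw [← hXY] at ha hb
    obtain ⟨xa, hxa, ya, hya, rfl⟩ := Submodule.mem_sup.mp ha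
    obtain ⟨xb, hxb, yb, hyb, rfl⟩ := Submodule.mem_sup.mp hb
    rw [hXrs, (he' β₀ hβ₀Δ).2.2] at hxa hxb
    obtain ⟨s, rfl⟩ := Submodule.mem_span_singleton.mp hxa
    obtain ⟨t, rfl⟩ := Submodule.mem_span_singleton.mp hxb
    have hexp : ⁅s • e β₀ + ya, t • e β₀ + yb⁆
        = s • ⁅e β₀, yb⁆ - t • ⁅e β₀, ya⁆ := by
      rw [add_lie, lie_add, lie_add, lie_smul, lie_smul, smul_lie, smul_lie, lie_self,
        smul_zero, smul_zero, zero_add, hYab ya hya yb hyb, add_zero, ← lie_skew (e β₀) ya,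
        smul_neg]
      abel
    rw [hexp]
    apply Submodule.sub_mem
    · exact Submodule.smul_mem _ _ ⟨yb, hyb, rfl⟩
    · exact Submodule.smul_mem _ _ ⟨ya, hya, rfl⟩
  have hgD : G.g Sg (-2) = Submodule.map (LieAlgebra.ad ℂ L (e β₀) : L →ₗ[ℂ] L) Y := by
    apply Submodule.eq_of_le_of_finrank_le
    · rw [hg2]
      apply iSup₂_le
      intro γ hγ2
      have hγΔ : γ ∈ R.Δ := hN2sub hγ2
      have htγ : R.ht Sg γ = -2 := (Finset.mem_filter.mp hγ2).2
      have hnγ : -γ ∈ R.Δ := R.neg_mem γ hγΔ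
      have htnγ : R.ht Sg (-γ) = 2 := by rw [R.ht_neg hSg hγΔ, htγ]; ring
      obtain ⟨β, hβ, δ, hδ, htβ, htδ, hsum⟩ :=
        R.ht2_decomp hSg (∑ α ∈ R.Δ0, R.coeff (-γ) α).toNat (-γ) hnγ
          (Int.self_le_toNat _) htnγ
      have hmβ : -β ∈ R.Δ := R.neg_mem β hβ
      have hmδ : -δ ∈ R.Δ := R.neg_mem δ hδ
      have hγeq : -β + -δ = γ := by
        have h9 : γ = -(β + δ) := by rw [← hsum, neg_neg]
        rw [h9, neg_add]
      have hmem : -β + -δ ∈ R.Δ := by rwa [hγeq]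
      have hbrm : ⁅e (-β), e (-δ)⁆ ∈ G.rs γ := by
        rw [← hγeq]
        exact G.br_rs_mem _ hmβ _ hmδ hmem _ (he' _ hmβ).1 _ (he' _ hmδ).1
      have hbrnz : ⁅e (-β), e (-δ)⁆ ≠ 0 := by
        intro h
        rcases G.br_nondeg _ hmβ _ hmδ hmem _ (he' _ hmβ).1 _ (he' _ hmδ).1 h with h | h
        · exact (he' _ hmβ).2.1 h
        · exact (he' _ hmδ).2.1 h
      have hrsγ : G.rs γ = Submodule.span ℂ {⁅e (-β), e (-δ)⁆} := by
        refine (Submodule.eq_of_le_of_finrank_le ?_ ?_).symm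
        · rwa [Submodule.span_singleton_le_iff_mem]
        · rw [G.rs_dim γ hγΔ, finrank_span_singleton hbrnz]
      rw [hrsγ, Submodule.span_singleton_le_iff_mem]
      apply hbrD
      · rw [hg1]
        exact le_iSup₂ (f := fun γ _ => G.rs γ) (-β)
          (Finset.mem_filter.mpr ⟨hmβ, by rw [R.ht_neg hSg hβ, htβ]⟩) (he' _ hmβ).1
      · rw [hg1]
        exact le_iSup₂ (f := fun γ _ => G.rs γ) (-δ)
          (Finset.mem_filter.mpr ⟨hmδ, by rw [R.ht_neg hSg hδ, htδ]⟩) (he' _ hmδ).1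
    · calc Module.finrank ℂ ↥(Submodule.map (LieAlgebra.ad ℂ L (e β₀) : L →ₗ[ℂ] L) Y)
          ≤ Module.finrank ℂ ↥Y := Submodule.finrank_map_le _ Y
        _ = Module.finrank ℂ ↥(G.g Sg (-2)) := hYdim.symm
  have hinj : ∀ y ∈ Y, ⁅e β₀, y⁆ = 0 → y = 0 := by
    set φ : ↥Y →ₗ[ℂ] L := (LieAlgebra.ad ℂ L (e β₀) : L →ₗ[ℂ] L) ∘ₗ Y.subtype with hφ
    have hrange : LinearMap.range φ
        = Submodule.map (LieAlgebra.ad ℂ L (e β₀) : L →ₗ[ℂ] L) Y := by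
      rw [hφ, LinearMap.range_comp, Submodule.range_subtype]
    have hrk := LinearMap.finrank_range_add_finrank_ker φ
    rw [hrange, ← hgD, hYdim] at hrk
    have hker : LinearMap.ker φ = ⊥ := by
      apply Submodule.finrank_eq_zero.mp
      have : Module.finrank ℂ ↥Y = Module.finrank ℂ ↥Y
          + Module.finrank ℂ ↥(LinearMap.ker φ) := by
        simpa using hrk
      omega
    intro y hy h0
    have hmem : (⟨y, hy⟩ : ↥Y) ∈ LinearMap.ker φ := by
      rw [LinearMap.mem_ker, hφ]
      simp only [LinearMap.coe_comp, Function.comp_apply, Submodule.coe_subtype]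
      rw [LieAlgebra.ad_apply]
      exact h0
    rw [hker, Submodule.mem_bot] at hmem
    exact congrArg Subtype.val hmem
  -- decompositions of e γ for γ ∈ N.erase β₀
  have hdecomp : ∀ γ ∈ N.erase β₀, ∃ c : ℂ, e γ - c • e β₀ ∈ Y := by
    intro γ hγ
    have hγN : γ ∈ N := (Finset.mem_erase.mp hγ).2
    have hmem : e γ ∈ X ⊔ Y := by
      rw [hXY, hg1]
      exact le_iSup₂ (f := fun δ _ => G.rs δ) γ hγN (he' γ (hNsub hγN)).1
    obtain ⟨ξ, hξ, u, hu, hsum⟩ := Submodule.mem_sup.mp hmem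
    rw [hXrs, (he' β₀ hβ₀Δ).2.2] at hξ
    obtain ⟨c, rfl⟩ := Submodule.mem_span_singleton.mp hξ
    exact ⟨c, by rw [← hsum]; simpa using hu⟩
  have hsum_ne : ∀ a ∈ N, ∀ b ∈ N, a + b ≠ 0 := by
    intro a ha b hb h
    have haΔ : a ∈ R.Δ := hNsub ha
    have hba : b = -a := eq_neg_of_add_eq_zero_right h
    have h2 := R.ht_neg hSg haΔ
    rw [← hba] at h2
    have ha' : R.ht Sg a = -1 := (Finset.mem_filter.mp ha).2
    have hb' : R.ht Sg b = -1 := (Finset.mem_filter.mp hb).2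
    omega
  have hbr_mem : ∀ a ∈ N, ∀ b ∈ N, ⁅e a, e b⁆ ∈ G.rs (a + b) := by
    intro a ha b hb
    have haΔ : a ∈ R.Δ := hNsub ha
    have hbΔ : b ∈ R.Δ := hNsub hb
    by_cases hmem : a + b ∈ R.Δ
    · exact G.br_rs_mem a haΔ b hbΔ hmem _ (he' a haΔ).1 _ (he' b hbΔ).1
    · have hne0 : a + b ≠ 0 := hsum_ne a ha b hb
      rw [G.br_rs_zero a haΔ b hbΔ hmem hne0 _ (he' a haΔ).1 _ (he' b hbΔ).1]
      exact Submodule.zero_mem _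
  have hnz : ∀ γ ∈ N.erase β₀, ⁅e β₀, e γ⁆ ≠ 0 := by
    intro γ hγ h0
    obtain ⟨c, hc⟩ := hdecomp γ hγ
    have hγN : γ ∈ N := (Finset.mem_erase.mp hγ).2
    have hbru : ⁅e β₀, e γ - c • e β₀⁆ = 0 := by
      rw [lie_sub, lie_smul, lie_self, smul_zero, sub_zero, h0]
    have hu0 : e γ - c • e β₀ = 0 := hinj _ hc hbru
    have : e γ = c • e β₀ := by
      have := sub_eq_zero.mp hu0
      exact this
    have hmem : e γ ∈ G.rs β₀ := by
      rw [this]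
      exact Submodule.smul_mem _ _ (he' β₀ hβ₀Δ).1
    have := aux_rs_disjoint G he' (hNsub hγN) hβ₀Δ (Finset.mem_erase.mp hγ).1
      (he' γ (hNsub hγN)).1 hmem
    exact (he' γ (hNsub hγN)).2.1 this
  have hrootsum : ∀ γ ∈ N.erase β₀, β₀ + γ ∈ R.Δ := by
    intro γ hγ
    by_contra hcon
    apply hnz γ hγ
    have hγN : γ ∈ N := (Finset.mem_erase.mp hγ).2
    have hne0 : β₀ + γ ≠ 0 := hsum_ne β₀ hβ₀N γ hγN
    exact G.br_rs_zero β₀ hβ₀Δ γ (hNsub hγN) hcon hne0 _ (he' β₀ hβ₀Δ).1 _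
      (he' γ (hNsub hγN)).1
  -- Step 4 : e γ ∈ Y for γ ∈ N.erase β₀
  have hYZ : ∀ γ ∈ N.erase β₀, e γ ∈ Y := by
    intro γ hγ
    have hγN : γ ∈ N := (Finset.mem_erase.mp hγ).2
    have hγβ₀ : γ ≠ β₀ := (Finset.mem_erase.mp hγ).1
    obtain ⟨c, hc⟩ := hdecomp γ hγ
    have hc0 : c = 0 := by
      by_contra hcne
      -- pick γ' distinct from γ and β₀
      have hcard' : 0 < ((N.erase β₀).erase γ).card := by
        rw [Finset.card_erase_of_mem hγ, Finset.card_erase_of_mem hβ₀N]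
        omega
      obtain ⟨γ', hγ'⟩ := Finset.card_pos.mp hcard'
      have hγ'e : γ' ∈ N.erase β₀ := (Finset.mem_erase.mp hγ').2
      have hγ'γ : γ' ≠ γ := (Finset.mem_erase.mp hγ').1
      have hγ'N : γ' ∈ N := (Finset.mem_erase.mp hγ'e).2
      have hγ'β₀ : γ' ≠ β₀ := (Finset.mem_erase.mp hγ'e).1
      obtain ⟨c', hc'⟩ := hdecomp γ' hγ'e
      have hab : ⁅e γ - c • e β₀, e γ' - c' • e β₀⁆ = 0 :=
        hYab _ hc _ hc'
      have hexp : ⁅e γ, e γ'⁆ - c' • ⁅e γ, e β₀⁆ - c • ⁅e β₀, e γ'⁆ = 0 := by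
        rw [← hab]
        simp only [sub_lie, lie_sub, smul_lie, lie_smul, lie_self, smul_zero, smul_smul,
          sub_zero]
        abel
      -- separation
      have hs3 : c • ⁅e β₀, e γ'⁆ = ⁅e γ, e γ'⁆ - c' • ⁅e γ, e β₀⁆ :=
        (sub_eq_zero.mp hexp).symm
      have d1 : γ + γ' ≠ β₀ + γ' := by
        intro h
        exact hγβ₀ (add_right_cancel h)
      have d2 : γ + β₀ ≠ β₀ + γ' := by
        intro h
        rw [add_comm β₀ γ'] at h
        exact hγ'γ (add_right_cancel h).symm
      have hmem2 : ⁅e γ, e γ'⁆ - c' • ⁅e γ, e β₀⁆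
          ∈ G.H ⊔ ⨆ δ ∈ R.Δ.erase (β₀ + γ'), G.rs δ := by
        apply Submodule.sub_mem
        · by_cases hr : γ + γ' ∈ R.Δ
          · exact Submodule.mem_sup_right (le_iSup₂ (f := fun δ _ => G.rs δ) (γ + γ')
              (Finset.mem_erase.mpr ⟨d1, hr⟩) (hbr_mem γ hγN γ' hγ'N))
          · rw [G.br_rs_zero γ (hNsub hγN) γ' (hNsub hγ'N) hr (hsum_ne γ hγN γ' hγ'N)
              _ (he' γ (hNsub hγN)).1 _ (he' γ' (hNsub hγ'N)).1]
            exact Submodule.zero_mem _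
        · by_cases hr : γ + β₀ ∈ R.Δ
          · exact Submodule.mem_sup_right (le_iSup₂ (f := fun δ _ => G.rs δ) (γ + β₀)
              (Finset.mem_erase.mpr ⟨d2, hr⟩)
              (Submodule.smul_mem _ _ (hbr_mem γ hγN β₀ hβ₀N)))
          · rw [G.br_rs_zero γ (hNsub hγN) β₀ hβ₀Δ hr (hsum_ne γ hγN β₀ hβ₀N)
              _ (he' γ (hNsub hγN)).1 _ (he' β₀ hβ₀Δ).1, smul_zero]
            exact Submodule.zero_mem _
      have hz1 : ⁅e γ, e γ'⁆ - c' • ⁅e γ, e β₀⁆ ∈ G.rs (β₀ + γ') := by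
        rw [← hs3]
        exact Submodule.smul_mem _ _ (hbr_mem β₀ hβ₀N γ' hγ'N)
      have hz0 : ⁅e γ, e γ'⁆ - c' • ⁅e γ, e β₀⁆ = 0 :=
        Submodule.disjoint_def.mp (G.rs_indep _ (hrootsum γ' hγ'e)) _ hz1 hmem2
      have hfin : c • ⁅e β₀, e γ'⁆ = 0 := by rw [hs3, hz0]
      rcases smul_eq_zero.mp hfin with h | h
      · exact hcne h
      · exact hnz γ' hγ'e h
    rw [hc0, zero_smul, sub_zero] at hc
    exact hc
  -- Z = Y
  have hZY : (⨆ γ ∈ N.erase β₀, G.rs γ) = Y := by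
    apply Submodule.eq_of_le_of_finrank_le
    · apply iSup₂_le
      intro γ hγ
      rw [(he' γ (hNsub (Finset.mem_erase.mp hγ).2)).2.2,
        Submodule.span_singleton_le_iff_mem]
      exact hYZ γ hγ
    · have h1 : Module.finrank ℂ ↥(⨆ γ ∈ N.erase β₀, G.rs γ) = (N.erase β₀).card :=
        aux_finrank G he' (fun γ hγ => hNsub (Finset.mem_erase.mp hγ).2)
      rw [h1, Finset.card_erase_of_mem hβ₀N]
      rw [hcard] at hYcodim
      omega
  refine ⟨⟨-β₀, ⟨hζSg, hXfinal⟩, ?_⟩, ?_⟩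
  · rintro ζ' ⟨hζ'Sg, hζ'X⟩
    by_contra hne'
    have hζ'Δ : -ζ' ∈ R.Δ := R.neg_mem ζ' (R.base_sub (hSg hζ'Sg))
    have hne2 : β₀ ≠ -ζ' := by
      intro h
      exact hne' (by rw [h, neg_neg])
    have hmem : e β₀ ∈ G.rs (-ζ') := by rw [← hζ'X]; exact heβ₀X
    have := aux_rs_disjoint G he' hβ₀Δ hζ'Δ hne2 (he' β₀ hβ₀Δ).1 hmem
    exact (he' β₀ hβ₀Δ).2.1 this
  · refine ⟨(N.erase β₀).image (fun γ => -γ), ?_, ?_⟩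
    · intro β hβ
      obtain ⟨γ, hγ, rfl⟩ := Finset.mem_image.mp hβ
      have hγN : γ ∈ N := (Finset.mem_erase.mp hγ).2
      have hγΔ : γ ∈ R.Δ := hNsub hγN
      refine ⟨R.neg_mem γ hγΔ, ?_⟩
      rw [R.ht_neg hSg hγΔ, (Finset.mem_filter.mp hγN).2]
      ring
    · rw [← hZY]
      apply le_antisymm
      · apply iSup₂_le
        intro γ hγ
        have hrw : G.rs γ = G.rs (-(-γ)) := by rw [neg_neg]
        rw [hrw]
        exact le_iSup₂ (f := fun δ _ => G.rs (-δ)) (-γ)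
          (Finset.mem_image.mpr ⟨γ, hγ, rfl⟩)
      · apply iSup₂_le
        intro β hβ
        obtain ⟨γ, hγ, rfl⟩ := Finset.mem_image.mp hβ
        rw [neg_neg]
        exact le_iSup₂ (f := fun δ _ => G.rs δ) γ hγ
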